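/- Let n ≥ 1. Then η_{n-1} ∈ ℤ[X_{n-1}], and there exists q ∈ ℤ[X_{n-1}] such that η_n = η_{n-1} + X_n·q and η_{n-1}² − X_n²·q² = −1 (i.e. η_n lies in ℤ[X_n] and has relative norm −1 to ℚ(X_{n-1}), so η_n ∈ RE_n⁻). -/

import Mathlib

open Real Finset

/-- product-to-sum -/
lemma pts (A B : ℝ) : (2*Real.cos A) * (2*Real.cos B) = 2*Real.cos (A+B) + 2*Real.cos (A-B) := by
  simp [Real.cos_add, Real.cos_sub]; ring

/-- sum-to-product -/
lemma sts (a b : ℝ) : Real.sin (a+b) - Real.sin (a-b) = 2*Real.cos a * Real.sin b := by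
  simp [Real.sin_add, Real.sin_sub]; ring

lemma two_cos_nat_mem (θ : ℝ) (k : ℕ) :
    (2*Real.cos ((k:ℝ)*θ)) ∈ Algebra.adjoin ℤ ({2*Real.cos θ} : Set ℝ) := by
  have gen := Algebra.self_mem_adjoin_singleton ℤ (2*Real.cos θ)
  have key : ∀ k : ℕ, (2*Real.cos ((k:ℝ)*θ)) ∈ Algebra.adjoin ℤ ({2*Real.cos θ} : Set ℝ) ∧
      (2*Real.cos (((k:ℝ)+1)*θ)) ∈ Algebra.adjoin ℤ ({2*Real.cos θ} : Set ℝ) := by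
    intro k
    induction k with
    | zero =>
      constructor
      · have h2 : ((2:ℕ):ℝ) ∈ Algebra.adjoin ℤ ({2*Real.cos θ} : Set ℝ) :=
          Subalgebra.natCast_mem _ 2
        push_cast at h2
        simpa using h2
      · simpa using gen
    | succ k ih =>
      refine ⟨by simpa using ih.2, ?_⟩
      have h := pts (((k:ℝ)+1)*θ) θ
      rw [show ((k:ℝ)+1)*θ + θ = ((k:ℝ)+1+1)*θ by ring,
          show ((k:ℝ)+1)*θ - θ = (k:ℝ)*θ by ring] at h
      have e : (2:ℝ)*Real.cos (((k:ℝ)+1+1)*θ)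
          = (2*Real.cos (((k:ℝ)+1)*θ)) * (2*Real.cos θ) - 2*Real.cos ((k:ℝ)*θ) := by
        linarith
      push_cast
      rw [e]
      exact sub_mem (mul_mem ih.2 gen) ih.1
  exact (key k).1

noncomputable def aSeq (c : ℝ) : ℕ → ℝ
  | 0 => 1
  | 1 => c - 1
  | (j+2) => c * aSeq c (j+1) - aSeq c j

lemma aSeq_mem (c : ℝ) (j : ℕ) : aSeq c j ∈ Algebra.adjoin ℤ ({c} : Set ℝ) := by
  have gen := Algebra.self_mem_adjoin_singleton ℤ c
  have key : ∀ j : ℕ, aSeq c j ∈ Algebra.adjoin ℤ ({c} : Set ℝ) ∧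
      aSeq c (j+1) ∈ Algebra.adjoin ℤ ({c} : Set ℝ) := by
    intro j
    induction j with
    | zero => exact ⟨by simp only [aSeq]; exact one_mem _, by simpa [aSeq] using sub_mem gen (one_mem _)⟩
    | succ k ih => exact ⟨ih.2, by simpa [aSeq] using sub_mem (mul_mem gen ih.2) ih.1⟩
  exact (key j).1

lemma aSeq_cos (θ : ℝ) (j : ℕ) :
    (2*Real.cos θ) * aSeq (2*Real.cos (2*θ)) j = 2*Real.cos ((2*(j:ℝ)+1)*θ) := by
  have key : ∀ j : ℕ, (2*Real.cos θ) * aSeq (2*Real.cos (2*θ)) j = 2*Real.cos ((2*(j:ℝ)+1)*θ) ∧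
      (2*Real.cos θ) * aSeq (2*Real.cos (2*θ)) (j+1) = 2*Real.cos ((2*(j:ℝ)+3)*θ) := by
    intro j
    induction j with
    | zero =>
      constructor
      · norm_num [aSeq]
      · have h := pts (2*θ) θ
        rw [show 2*θ + θ = (2*(0:ℝ)+3)*θ by ring, show 2*θ - θ = (2*(0:ℝ)+1)*θ by ring] at h
        norm_num [aSeq] at h ⊢
        nlinarith [h]
    | succ k ih =>
      refine ⟨by rw [ih.2]; push_cast; ring_nf, ?_⟩
      have hdef : aSeq (2*Real.cos (2*θ)) (k+2) =
          (2*Real.cos (2*θ)) * aSeq (2*Real.cos (2*θ)) (k+1) - aSeq (2*Real.cos (2*θ)) k := rfl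
      have h := pts ((2*(k:ℝ)+3)*θ) (2*θ)
      rw [show (2*(k:ℝ)+3)*θ + 2*θ = (2*(k:ℝ)+5)*θ by ring,
          show (2*(k:ℝ)+3)*θ - 2*θ = (2*(k:ℝ)+1)*θ by ring] at h
      have e : (2*Real.cos θ) * aSeq (2*Real.cos (2*θ)) (k+2)
          = (2*Real.cos (2*θ)) * ((2*Real.cos θ) * aSeq (2*Real.cos (2*θ)) (k+1))
            - (2*Real.cos θ) * aSeq (2*Real.cos (2*θ)) k := by rw [hdef]; ring
      rw [e, ih.1, ih.2]
      push_cast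
      rw [show (2*((k:ℝ)+1)+3)*θ = (2*(k:ℝ)+5)*θ by ring]
      linarith [h]
  exact (key j).1

lemma tele1 (θ : ℝ) (K : ℕ) :
    (∑ k ∈ Finset.range K, 2*Real.cos ((k:ℝ)*θ)) * Real.sin (θ/2)
      = Real.sin ((K:ℝ)*θ - θ/2) + Real.sin (θ/2) := by
  induction K with
  | zero => simp
  | succ K ih =>
    rw [Finset.sum_range_succ, add_mul, ih]
    have h := sts ((K:ℝ)*θ) (θ/2)
    push_cast
    rw [show ((K:ℝ)+1)*θ - θ/2 = (K:ℝ)*θ + θ/2 by ring]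
    linarith [h]

lemma tele2 (θ : ℝ) (K : ℕ) :
    (∑ j ∈ Finset.range K, 2*Real.cos ((2*(j:ℝ)+1)*θ)) * Real.sin θ
      = Real.sin (2*(K:ℝ)*θ) := by
  induction K with
  | zero => simp
  | succ K ih =>
    rw [Finset.sum_range_succ, add_mul, ih]
    have h := sts ((2*(K:ℝ)+1)*θ) θ
    push_cast
    rw [show 2*((K:ℝ)+1)*θ = (2*(K:ℝ)+1)*θ + θ by ring,
        show 2*(K:ℝ)*θ = (2*(K:ℝ)+1)*θ - θ by ring]
    linarith [h]

lemma sum_even_odd (f : ℕ → ℝ) (N : ℕ) :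
    ∑ k ∈ Finset.range (2*N), f k
      = (∑ j ∈ Finset.range N, f (2*j)) + ∑ j ∈ Finset.range N, f (2*j+1) := by
  induction N with
  | zero => simp
  | succ N ih =>
    rw [Nat.mul_succ, Finset.sum_range_succ, Finset.sum_range_succ,
        Finset.sum_range_succ (f := fun j => f (2*j)), Finset.sum_range_succ (f := fun j => f (2*j+1)), ih]
    ring

/-- `X n = 2 cos(2π/2^(n+2))`. -/
noncomputable def X (n : ℕ) : ℝ := 2 * Real.cos (2 * Real.pi / 2 ^ (n + 2))

/-- `η m = 1 + Σ_{k=1}^{2^m − 1} 2 cos(kπ/2^(m+1))`. -/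
noncomputable def η (m : ℕ) : ℝ :=
  1 + ∑ k ∈ Finset.Icc (1 : ℕ) (2 ^ m - 1), 2 * Real.cos ((k : ℝ) * Real.pi / 2 ^ (m + 1))

lemma eta_eq (m : ℕ) :
    η m = (∑ k ∈ Finset.range (2^m), 2*Real.cos ((k:ℝ)*(Real.pi/2^(m+1)))) - 1 := by
  have h1 : (1:ℕ) ≤ 2^m := Nat.one_le_two_pow
  have h : Finset.range (2^m) = insert 0 (Finset.Icc 1 (2^m - 1)) := by
    ext k; simp only [Finset.mem_range, Finset.mem_insert, Finset.mem_Icc]; omega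
  rw [η, h, Finset.sum_insert (by simp)]
  norm_num
  rw [show ∀ S : Finset ℕ, ∑ k ∈ S, 2*Real.cos ((k:ℝ)*(Real.pi/2^(m+1)))
        = ∑ k ∈ S, 2*Real.cos ((k:ℝ)*Real.pi/2^(m+1)) from
      fun S => Finset.sum_congr rfl (fun k _ => by rw [mul_div_assoc])]
  ring

theorem stmt10 (n : ℕ) (hn : 1 ≤ n) :
    η (n - 1) ∈ Algebra.adjoin ℤ ({X (n - 1)} : Set ℝ) ∧
      ∃ q : ℝ, q ∈ Algebra.adjoin ℤ ({X (n - 1)} : Set ℝ) ∧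
        η n = η (n - 1) + X n * q ∧
        η (n - 1) ^ 2 - X n ^ 2 * q ^ 2 = -1 := by
  obtain ⟨m, rfl⟩ := Nat.exists_eq_add_of_le' hn
  simp only [Nat.add_sub_cancel]
  set t : ℝ := Real.pi / 2^(m+2) with ht
  have h2m : (2:ℝ)^m ≠ 0 := by positivity
  have hXm : X m = 2*Real.cos (2*t) := by
    rw [X, ht]; congr 1; ring
  have hXn : X (m+1) = 2*Real.cos t := by
    rw [X, ht]; congr 1
    rw [show m+1+2 = (m+2)+1 by ring, pow_succ]; ring
  have hηm : η m = (∑ k ∈ Finset.range (2^m), 2*Real.cos ((k:ℝ)*(2*t))) - 1 := by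
    rw [eta_eq]
    congr 1
    refine Finset.sum_congr rfl fun k _ => ?_
    congr 2
    rw [ht, pow_succ]; ring
  have hηn : η (m+1) = (∑ k ∈ Finset.range (2^(m+1)), 2*Real.cos ((k:ℝ)*t)) - 1 := by
    rw [eta_eq, ht]
  -- q
  refine ⟨?_, ∑ j ∈ Finset.range (2^m), aSeq (X m) j, ?_, ?_, ?_⟩
  · rw [hηm, hXm]
    exact sub_mem (sum_mem fun k _ => two_cos_nat_mem (2*t) k) (one_mem _)
  · exact sum_mem fun j _ => aSeq_mem _ j
  all_goals {
    have hXq : X (m+1) * (∑ j ∈ Finset.range (2^m), aSeq (X m) j)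
        = ∑ j ∈ Finset.range (2^m), 2*Real.cos ((2*(j:ℝ)+1)*t) := by
      rw [hXn, hXm, Finset.mul_sum]
      exact Finset.sum_congr rfl fun j _ => aSeq_cos t j
    have hsin : 0 < Real.sin t := by
      apply Real.sin_pos_of_pos_of_lt_pi
      · rw [ht]; positivity
      · rw [ht]
        have h1 : (1:ℝ) < 2^(m+2) := by
          have : (2:ℝ)^0 < 2^(m+2) := by
            apply pow_lt_pow_right₀ (by norm_num) (by omega)
          simpa using this
        calc Real.pi / 2^(m+2) < Real.pi / 1 := by
              apply div_lt_div_of_pos_left Real.pi_pos (by norm_num) h1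
          _ = Real.pi := by ring
    have hA : η m * Real.sin t = Real.cos t := by
      have h1 := tele1 (2*t) (2^m)
      have harg : ((2:ℝ)^m)*(2*t) - (2*t)/2 = Real.pi/2 - t := by
        rw [ht, pow_add]; field_simp
      push_cast at h1
      rw [harg, show (2*t)/2 = t by ring, Real.sin_pi_div_two_sub] at h1
      rw [hηm]
      linarith [h1]
    have hB : (X (m+1) * (∑ j ∈ Finset.range (2^m), aSeq (X m) j)) * Real.sin t = 1 := by
      rw [hXq]
      have h2 := tele2 t (2^m)
      push_cast at h2
      rw [show 2*((2:ℝ)^m)*t = Real.pi/2 by rw [ht, pow_add]; field_simp,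
          Real.sin_pi_div_two] at h2
      exact h2
    first
    | -- equation η (m+1) = η m + X(m+1) * q
      (rw [hηn, show 2^(m+1) = 2*2^m from by rw [pow_succ]; ring, sum_even_odd, hXq]
       have heven : (∑ j ∈ Finset.range (2^m), 2*Real.cos (((2*j:ℕ):ℝ)*t)) = η m + 1 := by
         rw [hηm]
         have : (∑ j ∈ Finset.range (2^m), 2*Real.cos (((2*j:ℕ):ℝ)*t))
             = ∑ j ∈ Finset.range (2^m), 2*Real.cos ((j:ℝ)*(2*t)) := by
           refine Finset.sum_congr rfl fun j _ => ?_
           congr 1; push_cast; ring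
         rw [this]; ring
       have hodd : (∑ j ∈ Finset.range (2^m), 2*Real.cos (((2*j+1:ℕ):ℝ)*t))
           = ∑ j ∈ Finset.range (2^m), 2*Real.cos ((2*(j:ℝ)+1)*t) := by
         refine Finset.sum_congr rfl fun j _ => ?_
         congr 1; push_cast; ring
       rw [heven, hodd]; ring)
    | -- norm equation
      (have e1 : η m ^2 * Real.sin t ^2 = Real.cos t ^2 := by rw [← mul_pow, hA]
       have e2 : X (m+1)^2 * (∑ j ∈ Finset.range (2^m), aSeq (X m) j)^2 * Real.sin t ^2 = 1 := by
         rw [show X (m+1)^2 * (∑ j ∈ Finset.range (2^m), aSeq (X m) j)^2 * Real.sin t ^2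
             = ((X (m+1) * (∑ j ∈ Finset.range (2^m), aSeq (X m) j)) * Real.sin t)^2 by ring,
             hB, one_pow]
       have hpyth := Real.sin_sq_add_cos_sq t
       have hs2 : Real.sin t ^2 ≠ 0 := pow_ne_zero _ hsin.ne'
       apply mul_right_cancel₀ hs2
       linear_combination e1 - e2 + hpyth)
  }
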